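/- In the mod 2 lambda algebra, let λ_I = λ_{I(1)}···λ_{I(s)} be an admissible monomial of length s ≥ 1, and write λ_i λ_I as a sum of admissible monomials λ_J of length s+1. Then every such λ_J satisfies i + J(1) + ⋯ + J(s) ≥ J(s+1). -/

import Mathlib

/-- The defining relations of the mod 2 lambda algebra:
`λ_i λ_{2i+1+j} = Σ_{t≥0} C(j−t−1, t) λ_{i+j−t} λ_{2i+1+t}` (coefficients mod 2). -/
inductive LambdaRel : FreeAlgebra (ZMod 2) ℕ → FreeAlgebra (ZMod 2) ℕ → Prop
  | adem (i j : ℕ) :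
      LambdaRel (FreeAlgebra.ι (ZMod 2) i * FreeAlgebra.ι (ZMod 2) (2 * i + 1 + j))
        (∑ t ∈ Finset.range j, ((Nat.choose (j - t - 1) t : ZMod 2) •
          (FreeAlgebra.ι (ZMod 2) (i + j - t) * FreeAlgebra.ι (ZMod 2) (2 * i + 1 + t))))

/-- The mod 2 lambda algebra `Λ`. -/
def LambdaAlg : Type := RingQuot LambdaRel

noncomputable instance : Ring LambdaAlg :=
  inferInstanceAs (Ring (RingQuot LambdaRel))

/-- The generator `λ_i` of the lambda algebra. -/
noncomputable def lam (i : ℕ) : LambdaAlg :=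
  RingQuot.mkRingHom LambdaRel (FreeAlgebra.ι (ZMod 2) i)

/-- The monomial `λ_{I(1)} ⋯ λ_{I(s)}` associated to a list `I`. -/
noncomputable def lamProd (I : List ℕ) : LambdaAlg := (I.map lam).prod

/-- A monomial `λ_{I(1)} ⋯ λ_{I(s)}` is admissible if `2 I(r) ≥ I(r+1)` for all `r`. -/
def LambdaAdmissible (I : List ℕ) : Prop := I.Chain' (fun a b => b ≤ 2 * a)

/- ------------ auxiliary machinery ------------- -/

noncomputable instance : Algebra (ZMod 2) LambdaAlg :=
  inferInstanceAs (Algebra (ZMod 2) (RingQuot LambdaRel))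

lemma LambdaAlg.add_self (x : LambdaAlg) : x + x = 0 := by
  have h : ((1 : ZMod 2) + 1) • x = x + x := by rw [add_smul, one_smul]
  rw [← h, show (1 : ZMod 2) + 1 = 0 by decide, zero_smul]

lemma zmod2_cases : ∀ c : ZMod 2, c = 0 ∨ c = 1 := by decide

lemma lamProd_nil : lamProd [] = 1 := rfl

lemma lamProd_cons (a : ℕ) (l : List ℕ) : lamProd (a :: l) = lam a * lamProd l := by
  simp [lamProd]

lemma lam_eq_mkAlgHom (k : ℕ) :
    lam k = RingQuot.mkAlgHom (ZMod 2) LambdaRel (FreeAlgebra.ι (ZMod 2) k) := by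
  rw [lam, ← RingQuot.mkAlgHom_coe (ZMod 2) LambdaRel]; rfl

lemma adem_ringquot (m j : ℕ) :
    (RingQuot.mkAlgHom (ZMod 2) LambdaRel) (FreeAlgebra.ι (ZMod 2) m) *
        (RingQuot.mkAlgHom (ZMod 2) LambdaRel) (FreeAlgebra.ι (ZMod 2) (2 * m + 1 + j)) =
      ∑ t ∈ Finset.range j, ((Nat.choose (j - t - 1) t : ZMod 2) •
        ((RingQuot.mkAlgHom (ZMod 2) LambdaRel) (FreeAlgebra.ι (ZMod 2) (m + j - t)) *
          (RingQuot.mkAlgHom (ZMod 2) LambdaRel) (FreeAlgebra.ι (ZMod 2) (2 * m + 1 + t)))) := by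
  rw [← map_mul, RingQuot.mkAlgHom_rel _ (LambdaRel.adem m j), map_sum]
  refine Finset.sum_congr rfl fun t _ => ?_
  rw [map_smul, map_mul]

lemma lam_adem (m j : ℕ) :
    lam m * lam (2 * m + 1 + j) = ∑ t ∈ Finset.range j,
      ((Nat.choose (j - t - 1) t : ZMod 2) • (lam (m + j - t) * lam (2 * m + 1 + t))) := by
  simp only [lam_eq_mkAlgHom]
  exact adem_ringquot m j

open scoped symmDiff in
lemma lam_sum_symmDiff (S T : Finset (List ℕ)) (f : List ℕ → LambdaAlg) :
    ∑ J ∈ S ∆ T, f J = ∑ J ∈ S, f J + ∑ J ∈ T, f J := by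
  classical
  have hS : ∑ J ∈ S \ (S ∩ T), f J + ∑ J ∈ S ∩ T, f J = ∑ J ∈ S, f J :=
    Finset.sum_sdiff Finset.inter_subset_left
  have hT : ∑ J ∈ T \ (S ∩ T), f J + ∑ J ∈ S ∩ T, f J = ∑ J ∈ T, f J :=
    Finset.sum_sdiff Finset.inter_subset_right
  have hd : Disjoint (S \ T) (T \ S) := disjoint_sdiff_sdiff
  have hu : S ∆ T = (S \ T) ∪ (T \ S) := by
    rw [symmDiff_def]; rfl
  rw [hu, Finset.sum_union hd, ← hS, ← hT, Finset.sdiff_inter_self_left,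
    Finset.sdiff_inter_self_right]
  have := LambdaAlg.add_self (∑ J ∈ S ∩ T, f J)
  abel_nf
  rw [show (2 : ℤ) • (∑ J ∈ S ∩ T, f J) = ∑ J ∈ S ∩ T, f J + ∑ J ∈ S ∩ T, f J by
    rw [two_zsmul], this, add_zero]

/-- `x` can be represented as a sum of `lamProd J` over a finset of lists satisfying `P`. -/
def LamRep (P : List ℕ → Prop) (x : LambdaAlg) : Prop :=
  ∃ S : Finset (List ℕ), (∀ J ∈ S, P J) ∧ x = ∑ J ∈ S, lamProd J

lemma LamRep.zero (P : List ℕ → Prop) : LamRep P 0 :=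
  ⟨∅, by simp, by simp⟩

lemma LamRep.add {P : List ℕ → Prop} {x y : LambdaAlg}
    (hx : LamRep P x) (hy : LamRep P y) : LamRep P (x + y) := by
  classical
  obtain ⟨S, hS, rfl⟩ := hx
  obtain ⟨T, hT, rfl⟩ := hy
  refine ⟨symmDiff S T, ?_, (lam_sum_symmDiff S T lamProd).symm⟩
  intro J hJ
  rcases Finset.mem_symmDiff.1 hJ with ⟨h, _⟩ | ⟨h, _⟩
  exacts [hS J h, hT J h]

lemma LamRep.sum {P : List ℕ → Prop} {α : Type*} {s : Finset α} {f : α → LambdaAlg}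
    (h : ∀ a ∈ s, LamRep P (f a)) : LamRep P (∑ a ∈ s, f a) := by
  classical
  induction s using Finset.induction_on with
  | empty => simpa using LamRep.zero P
  | insert _ _ hx ih =>
    rw [Finset.sum_insert hx]
    exact (h _ (Finset.mem_insert_self _ _)).add
      (ih fun a ha => h a (Finset.mem_insert_of_mem ha))

lemma getLastD_of_ne_nil {l : List ℕ} (h : l ≠ []) (d d' : ℕ) :
    l.getLastD d = l.getLastD d' := by
  rw [List.getLastD_eq_getLast?, List.getLastD_eq_getLast?, List.getLast?_eq_getLast h]
  rfl

lemma sum_dropLast_add_getLastD {J : List ℕ} (h : J ≠ []) :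
    J.dropLast.sum + J.getLastD 0 = J.sum := by
  conv_rhs => rw [← List.dropLast_append_getLast h]
  rw [List.sum_append, List.getLastD_eq_getLast?, List.getLast?_eq_getLast h]
  simp

lemma admissible_last_le : ∀ (L : List ℕ) (m : ℕ), L.Chain' (fun a b => b ≤ 2 * a) →
    (∀ h ∈ L.head?, h ≤ 2 * m) → L.getLastD 0 ≤ 2 * m + L.dropLast.sum := by
  intro L
  induction L with
  | nil => intro m _ _; simp
  | cons a L ih =>
    intro m hc hh
    have ha : a ≤ 2 * m := hh a rfl
    cases L with
    | nil => simpa using ha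
    | cons b L' =>
      obtain ⟨h1, h2⟩ := List.isChain_cons.1 hc
      have := ih a h2 (by intro y hy; simp at hy; subst hy; exact h1 b rfl)
      have e : (a :: b :: L').getLastD 0 = (b :: L').getLastD 0 := by
        rw [List.getLastD_cons, getLastD_of_ne_nil (by simp) a 0]
      rw [e]
      have ed : (a :: b :: L').dropLast = a :: (b :: L').dropLast := rfl
      rw [ed, List.sum_cons]
      omega

/-- The invariant carried through the rewriting induction. -/
def LamGood (m : ℕ) (L : List ℕ) (J : List ℕ) : Prop :=
  J.length = L.length + 1 ∧ LambdaAdmissible J ∧ J.sum = m + L.sum ∧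
  J.getLastD 0 ≤ L.getLastD m ∧ 2 * J.getLastD 0 ≤ 2 * m + L.sum

lemma lam_key : ∀ n m (L : List ℕ), L.sum < n → LambdaAdmissible L →
    LamRep (LamGood m L) (lam m * lamProd L) := by
  intro n
  induction n with
  | zero => intro m L h; omega
  | succ n ih =>
    intro m L hLn hadm
    cases L with
    | nil =>
      refine ⟨{[m]}, ?_, ?_⟩
      · intro J hJ
        rw [Finset.mem_singleton] at hJ
        subst hJ
        refine ⟨rfl, List.isChain_singleton m, by simp, le_refl _, by simp⟩
      · simp [lamProd_cons, lamProd_nil]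
    | cons a L' =>
      obtain ⟨hh, hadm'⟩ := List.isChain_cons.1 hadm
      by_cases hle : a ≤ 2 * m
      · refine ⟨{m :: a :: L'}, ?_, ?_⟩
        · intro J hJ
          rw [Finset.mem_singleton] at hJ
          subst hJ
          have hadmJ : LambdaAdmissible (m :: a :: L') :=
            List.isChain_cons.2 ⟨by intro y hy; simp at hy; omega, hadm⟩
          refine ⟨by simp, hadmJ, by simp [List.sum_cons], ?_, ?_⟩
          · rw [List.getLastD_cons]
          · have h1 := admissible_last_le (a :: L') m hadm
              (by intro y hy; simp at hy; omega)
            have h2 := sum_dropLast_add_getLastD (J := a :: L') (by simp)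
            rw [List.getLastD_cons, getLastD_of_ne_nil (by simp) m 0]
            omega
        · rw [Finset.sum_singleton, lamProd_cons, lamProd_cons, lamProd_cons]
      · set j := a - (2 * m + 1) with hj
        have ha : a = 2 * m + 1 + j := by omega
        have hstep : lam m * lamProd (a :: L') = ∑ t ∈ Finset.range j,
            ((Nat.choose (j - t - 1) t : ZMod 2) •
              (lam (m + j - t) * (lam (2 * m + 1 + t) * lamProd L'))) := by
          rw [lamProd_cons, ← mul_assoc, ha, lam_adem, Finset.sum_mul]
          refine Finset.sum_congr rfl fun t _ => ?_
          rw [smul_mul_assoc, mul_assoc]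
        rw [hstep]
        apply LamRep.sum
        intro t ht
        have htj : t < j := Finset.mem_range.1 ht
        rcases zmod2_cases ((Nat.choose (j - t - 1) t : ZMod 2)) with hc | hc
        · rw [hc, zero_smul]; exact LamRep.zero _
        · rw [hc, one_smul]
          have h2t : 2 * t + 1 ≤ j := by
            by_contra hcon
            have hlt : j - t - 1 < t := by omega
            rw [Nat.choose_eq_zero_of_lt hlt] at hc
            simp at hc
          have hsumL : (a :: L').sum = a + L'.sum := List.sum_cons
          have h1 : L'.sum < n := by omega
          obtain ⟨S₁, hS₁good, hS₁eq⟩ := ih (2 * m + 1 + t) L' h1 hadm'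
          rw [hS₁eq, Finset.mul_sum]
          apply LamRep.sum
          intro K hK
          obtain ⟨hKlen, hKadm, hKsum, hKlast, hKlast2⟩ := hS₁good K hK
          have hKne : K ≠ [] := by
            intro h; rw [h] at hKlen; simp at hKlen
          have h2 : K.sum < n := by omega
          obtain ⟨S₂, hS₂good, hS₂eq⟩ := ih (m + j - t) K h2 hKadm
          refine ⟨S₂, ?_, hS₂eq⟩
          intro J hJ
          obtain ⟨hJlen, hJadm, hJsum, hJlast, hJlast2⟩ := hS₂good J hJ
          have eJK : J.getLastD 0 ≤ K.getLastD 0 := by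
            rw [getLastD_of_ne_nil hKne 0 (m + j - t)]
            exact hJlast
          refine ⟨by rw [hJlen, hKlen]; simp, hJadm, by rw [hJsum, hKsum]; simp [hsumL]; omega,
            ?_, ?_⟩
          · cases L' with
            | nil =>
              rw [List.getLastD_nil] at hKlast
              rw [List.getLastD_cons, List.getLastD_nil]
              omega
            | cons b L'' =>
              have e1 : (b :: L'').getLastD (2 * m + 1 + t) = (b :: L'').getLastD 0 :=
                getLastD_of_ne_nil (by simp) _ _
              have e2 : (a :: b :: L'').getLastD m = (b :: L'').getLastD 0 := by
                rw [List.getLastD_cons, getLastD_of_ne_nil (by simp) a 0]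
              rw [e2]
              rw [e1] at hKlast
              omega
          · omega
  
/-- Let `λ_I` be an admissible monomial of length `s ≥ 1` in the mod 2
lambda algebra, and write `λ_i λ_I` as a sum of admissible monomials `λ_J` of length
`s + 1`.  Then every such `λ_J` satisfies `i + J(1) + ⋯ + J(s) ≥ J(s+1)`. -/
theorem lam_mul_admissible_last_index_bound (i : ℕ) (I : List ℕ)
    (hne : I ≠ []) (hadm : LambdaAdmissible I) :
    ∃ S : Finset (List ℕ),
      (∀ J ∈ S, J.length = I.length + 1 ∧ LambdaAdmissible J ∧
        J.getLastD 0 ≤ i + J.dropLast.sum) ∧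
      lam i * lamProd I = ∑ J ∈ S, lamProd J := by
  obtain ⟨S, hS, heq⟩ := lam_key (I.sum + 1) i I (Nat.lt_succ_self _) hadm
  refine ⟨S, ?_, heq⟩
  intro J hJ
  obtain ⟨hlen, hadmJ, hsum, _, hlast2⟩ := hS J hJ
  have hJne : J ≠ [] := by intro h; rw [h] at hlen; simp at hlen
  have hsplit := sum_dropLast_add_getLastD hJne
  exact ⟨hlen, hadmJ, by omega⟩
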